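/- (Theorem 9) The combined operator P_link U^y_π commutes with the link-centered twist operators: (P_link U^y_π) U^twl_{±2π} = U^twl_{±2π} (P_link U^y_π). -/

import Mathlib

open scoped BigOperators Matrix
open Fin.NatCast
noncomputable section

namespace LSM

/-- Number of basis states per site: `2S+1`. -/
abbrev N (twoS : ℕ) : ℕ := twoS + 1

/-- The spin value `S` as a real number (so `2S = twoS`). -/
def spin (twoS : ℕ) : ℝ := (twoS : ℝ) / 2

/-- The `S^z`-value of the `k`-th basis vector: `m = S - k`, `k = 0, …, 2S`. -/
def mval (twoS : ℕ) (k : Fin (N twoS)) : ℝ := spin twoS - (k : ℕ)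

/-- Single-site `S^z` matrix. -/
def SzMat (twoS : ℕ) : Matrix (Fin (N twoS)) (Fin (N twoS)) ℂ :=
  Matrix.diagonal fun k => (mval twoS k : ℂ)

/-- Single-site raising operator `S^+`. -/
def SpMat (twoS : ℕ) : Matrix (Fin (N twoS)) (Fin (N twoS)) ℂ :=
  Matrix.of fun a b =>
    if (a : ℕ) + 1 = (b : ℕ) then
      ((Real.sqrt (spin twoS * (spin twoS + 1) - mval twoS b * (mval twoS b + 1)) : ℝ) : ℂ)
    else 0

/-- Single-site lowering operator `S^-`. -/
def SmMat (twoS : ℕ) : Matrix (Fin (N twoS)) (Fin (N twoS)) ℂ :=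
  Matrix.of fun a b =>
    if (a : ℕ) = (b : ℕ) + 1 then
      ((Real.sqrt (spin twoS * (spin twoS + 1) - mval twoS b * (mval twoS b - 1)) : ℝ) : ℂ)
    else 0

/-- Single-site `S^y = (S^+ - S^-)/(2i)`. -/
def SyMat (twoS : ℕ) : Matrix (Fin (N twoS)) (Fin (N twoS)) ℂ :=
  ((2 : ℂ) * Complex.I)⁻¹ • (SpMat twoS - SmMat twoS)

/-- Single-site `S^x = (S^+ + S^-)/2`. -/
def SxMat (twoS : ℕ) : Matrix (Fin (N twoS)) (Fin (N twoS)) ℂ :=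
  ((2 : ℂ))⁻¹ • (SpMat twoS + SmMat twoS)

/-- Configurations (product basis labels) of the chain of length `L`. -/
abbrev Conf (twoS L : ℕ) := Fin L → Fin (N twoS)

/-- Operators on the chain Hilbert space `⊗_{j=1}^L ℂ^{2S+1}`, as matrices in the
product basis. -/
abbrev Op (twoS L : ℕ) := Matrix (Conf twoS L) (Conf twoS L) ℂ

/-- The single-site matrix `A` acting on the `j`-th tensor factor (identity elsewhere). -/
def site (twoS L : ℕ) (j : Fin L) (A : Matrix (Fin (N twoS)) (Fin (N twoS)) ℂ) :
    Op twoS L :=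
  Matrix.of fun x y => if ∀ i, i ≠ j → x i = y i then A (x j) (y j) else 0

/-- Total `S^z`. -/
def SzT (twoS L : ℕ) : Op twoS L := ∑ j : Fin L, site twoS L j (SzMat twoS)

/-- Total `S^y`. -/
def SyT (twoS L : ℕ) : Op twoS L := ∑ j : Fin L, site twoS L j (SyMat twoS)

/-- Translation by one site: the permutation matrix with
`Utrl† A_j Utrl = A_{j+1}` for every single-site operator `A`. -/
def Utrl (twoS L : ℕ) [NeZero L] : Op twoS L :=
  Matrix.of fun x y => if x = (fun i => y (i + 1)) then 1 else 0

/-- Site parity (space inversion `j ↦ L - j = -j (mod L)`): the permutation matrix with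
`P† A_j P = A_{L-j}` for every single-site operator `A`. -/
def Pop (twoS L : ℕ) [NeZero L] : Op twoS L :=
  Matrix.of fun x y => if x = (fun i => y (-i)) then 1 else 0

/-- Link parity `P_link = P U_trl`. -/
def Plink (twoS L : ℕ) [NeZero L] : Op twoS L := Pop twoS L * Utrl twoS L

/-- The generalized XXZ Hamiltonian with periodic boundary conditions. -/
def Ham (twoS L : ℕ) [NeZero L] (J Δ : ℕ → ℝ) (h : ℝ) : Op twoS L :=
  (∑ j : Fin L, ∑ r ∈ Finset.Icc 1 (L / 2),
      ((((J r : ℝ) : ℂ) / 2) •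
        (site twoS L j (SpMat twoS) * site twoS L (j + (r : Fin L)) (SmMat twoS) +
          site twoS L j (SmMat twoS) * site twoS L (j + (r : Fin L)) (SpMat twoS)) +
      ((Δ r : ℝ) : ℂ) •
        (site twoS L j (SzMat twoS) * site twoS L (j + (r : Fin L)) (SzMat twoS)))) +
    (h : ℂ) • SzT twoS L

/-- The generator `Σ_{j=1}^{L} j (S^z_j - S)` of the (site-centered) twist. -/
def twistGen (twoS L : ℕ) [NeZero L] : Op twoS L :=
  ∑ j ∈ Finset.Icc 1 L,
    (j : ℂ) • site twoS L ((j : ℕ) : Fin L) (SzMat twoS - ((spin twoS : ℝ) : ℂ) • 1)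

/-- The twist operator `U^tw_{ε·2π} = exp(-ε (2πi/L) Σ_j j (S^z_j - S))`, `ε = ±1`. -/
def Utw (twoS L : ℕ) [NeZero L] (ε : ℝ) : Op twoS L :=
  NormedSpace.exp ((-(ε : ℂ) * ((2 * Real.pi / L : ℝ) : ℂ) * Complex.I) • twistGen twoS L)

/-- The generator `Σ_{j=1}^{L} (j - 1/2)(S^z_j - S)` of the link-centered twist. -/
def twistGenL (twoS L : ℕ) [NeZero L] : Op twoS L :=
  ∑ j ∈ Finset.Icc 1 L,
    ((j : ℂ) - 1 / 2) • site twoS L ((j : ℕ) : Fin L) (SzMat twoS - ((spin twoS : ℝ) : ℂ) • 1)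

/-- The link-centered twist operator `U^twl_{ε·2π}`, `ε = ±1`. -/
def UtwL (twoS L : ℕ) [NeZero L] (ε : ℝ) : Op twoS L :=
  NormedSpace.exp ((-(ε : ℂ) * ((2 * Real.pi / L : ℝ) : ℂ) * Complex.I) • twistGenL twoS L)

/-- The spin-reversal operator `U^y_π = exp(-iπ S^y_T)`. -/
def Uy (twoS L : ℕ) : Op twoS L :=
  NormedSpace.exp ((-Complex.I * ((Real.pi : ℝ) : ℂ)) • SyT twoS L)

/-- The sector `V(M, q)` of simultaneous eigenvectors of `S^z_T` (eigenvalue `M`) and of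
the translation `U_trl` (eigenvalue `e^{iq}`). -/
def Vsp (twoS L : ℕ) [NeZero L] (M q : ℝ) : Submodule ℂ (Conf twoS L → ℂ) :=
  Module.End.eigenspace (Matrix.mulVecLin (SzT twoS L)) ((M : ℝ) : ℂ) ⊓
    Module.End.eigenspace (Matrix.mulVecLin (Utrl twoS L)) (Complex.exp (Complex.I * q))

/-- `E(M; q)`: the smallest eigenvalue of `H` restricted to the sector `V(M,q)`. -/
def En (twoS L : ℕ) [NeZero L] (J Δ : ℕ → ℝ) (h : ℝ) (M q : ℝ) : ℝ :=
  sInf {E : ℝ | ∃ ψ ∈ Vsp twoS L M q, ψ ≠ 0 ∧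
    (Ham twoS L J Δ h).mulVec ψ = ((E : ℝ) : ℂ) • ψ}

/-- The expectation value `⟨ψ, A ψ⟩`. -/
def expVal (twoS L : ℕ) (A : Op twoS L) (ψ : Conf twoS L → ℂ) : ℂ :=
  dotProduct (star ψ) (A.mulVec ψ)

/-- `q` belongs to the lattice `(2π/L)ℤ` of allowed wavenumbers. -/
def allowedQ (L : ℕ) (q : ℝ) : Prop := ∃ k : ℤ, q = 2 * Real.pi * k / L



section Aux
variable {twoS : ℕ}

def gval (twoS : ℕ) (a : Fin (N twoS)) : ℝ :=
  spin twoS * (spin twoS + 1) - mval twoS a * (mval twoS a - 1)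
def fval (twoS : ℕ) (a : Fin (N twoS)) : ℝ :=
  spin twoS * (spin twoS + 1) - mval twoS a * (mval twoS a + 1)

lemma val_le (a : Fin (N twoS)) : (a : ℕ) ≤ twoS := by
  have : (a : ℕ) < twoS + 1 := a.isLt
  omega

lemma gval_nonneg (a : Fin (N twoS)) : 0 ≤ gval twoS a := by
  have ha : (a : ℝ) ≤ (twoS : ℝ) := by exact_mod_cast val_le a
  have ha0 : (0:ℝ) ≤ (a : ℝ) := Nat.cast_nonneg _
  unfold gval mval spin
  nlinarith [mul_nonneg (sub_nonneg.mpr ha) (by positivity : (0:ℝ) ≤ (a:ℝ)+1)]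

lemma fval_nonneg (a : Fin (N twoS)) : 0 ≤ fval twoS a := by
  have ha : (a : ℝ) ≤ (twoS : ℝ) := by exact_mod_cast val_le a
  have ha0 : (0:ℝ) ≤ (a : ℝ) := Nat.cast_nonneg _
  unfold fval mval spin
  nlinarith [mul_nonneg ha0 (by linarith : (0:ℝ) ≤ (twoS:ℝ) - (a:ℝ) + 1)]

lemma Sz_comm_Sp : SzMat twoS * SpMat twoS = SpMat twoS * SzMat twoS + SpMat twoS := by
  ext a b
  rw [SzMat, Matrix.add_apply, Matrix.diagonal_mul, Matrix.mul_diagonal]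
  by_cases hab : (a : ℕ) + 1 = (b : ℕ)
  · have hm : (mval twoS a : ℂ) = (mval twoS b : ℂ) + 1 := by
      unfold mval spin; push_cast [← hab]; ring
    simp only [SpMat, Matrix.of_apply, hab, if_true, hm]; ring
  · simp [SpMat, hab]

lemma Sz_comm_Sm : SzMat twoS * SmMat twoS = SmMat twoS * SzMat twoS - SmMat twoS := by
  ext a b
  rw [SzMat, Matrix.sub_apply, Matrix.diagonal_mul, Matrix.mul_diagonal]
  by_cases hab : (a : ℕ) = (b : ℕ) + 1
  · have hm : (mval twoS a : ℂ) = (mval twoS b : ℂ) - 1 := by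
      unfold mval spin; push_cast [hab]; ring
    simp only [SmMat, Matrix.of_apply, hab, if_true, hm]; ring
  · simp [SmMat, hab]

lemma Sp_mul_Sm : SpMat twoS * SmMat twoS = Matrix.diagonal (fun a => ((gval twoS a : ℝ) : ℂ)) := by
  ext a b
  rw [Matrix.mul_apply]
  by_cases hlt : (a : ℕ) < twoS
  · have hc : (a : ℕ) + 1 < N twoS := by simp only [N]; omega
    set c : Fin (N twoS) := ⟨(a:ℕ)+1, hc⟩ with hcdef
    have h1 : (a : ℕ) + 1 = (c : ℕ) := rfl
    have e1 : SpMat twoS a c = ((Real.sqrt (gval twoS a) : ℝ) : ℂ) := by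
      simp only [SpMat, Matrix.of_apply, if_pos h1]
      have : mval twoS c = mval twoS a - 1 := by
        unfold mval; rw [← h1]; push_cast; ring
      rw [this]
      norm_num [gval]
      ring_nf
    rw [Finset.sum_eq_single c]
    · rw [e1]
      by_cases hab : a = b
      · subst hab
        have h2 : (c : ℕ) = (a : ℕ) + 1 := rfl
        have e2 : SmMat twoS c a = ((Real.sqrt (gval twoS a) : ℝ) : ℂ) := by
          simp only [SmMat, Matrix.of_apply, if_pos h2]
          norm_num [gval]
        rw [e2, Matrix.diagonal_apply_eq, ← Complex.ofReal_mul,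
          Real.mul_self_sqrt (gval_nonneg a)]
      · have hne : ¬ ((c : ℕ) = (b : ℕ) + 1) := by
          intro h
          exact hab (Fin.ext (by omega))
        simp [SmMat, hne, Matrix.diagonal_apply_ne _ hab]
    · intro d _ hne
      have : ¬ ((a : ℕ) + 1 = (d : ℕ)) := by
        intro h; exact hne (Fin.ext (by omega))
      simp [SpMat, this]
    · intro h; exact absurd (Finset.mem_univ _) h
  · have haS : (a : ℕ) = twoS := by
      have := val_le a; omega
    have hz : ∀ d : Fin (N twoS), SpMat twoS a d = 0 := by
      intro d
      have : ¬ ((a : ℕ) + 1 = (d : ℕ)) := by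
        have := val_le d; omega
      simp [SpMat, this]
    simp only [hz, zero_mul, Finset.sum_const_zero]
    by_cases hab : a = b
    · subst hab
      have : gval twoS a = 0 := by
        unfold gval mval spin; rw [haS]; push_cast; ring
      simp [this]
    · simp [Matrix.diagonal_apply_ne _ hab]

lemma Sm_mul_Sp : SmMat twoS * SpMat twoS = Matrix.diagonal (fun a => ((fval twoS a : ℝ) : ℂ)) := by
  ext a b
  rw [Matrix.mul_apply]
  by_cases hlt : 0 < (a : ℕ)
  · have hc : (a : ℕ) - 1 < N twoS := by
      have := a.isLt; simp only [N] at *; omega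
    set c : Fin (N twoS) := ⟨(a:ℕ)-1, hc⟩ with hcdef
    have h1 : (a : ℕ) = (c : ℕ) + 1 := by
      simp only [hcdef]; omega
    have e1 : SmMat twoS a c = ((Real.sqrt (fval twoS a) : ℝ) : ℂ) := by
      simp only [SmMat, Matrix.of_apply, if_pos h1]
      have : mval twoS c = mval twoS a + 1 := by
        unfold mval
        have : ((c : ℕ) : ℝ) = ((a : ℕ) : ℝ) - 1 := by
          rw [h1]; push_cast; ring
        rw [this]; ring
      rw [this]
      norm_num [fval]
      ring_nf
    rw [Finset.sum_eq_single c]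
    · rw [e1]
      by_cases hab : a = b
      · subst hab
        have h2 : (c : ℕ) + 1 = (a : ℕ) := h1.symm
        have e2 : SpMat twoS c a = ((Real.sqrt (fval twoS a) : ℝ) : ℂ) := by
          simp only [SpMat, Matrix.of_apply, if_pos h2]
          norm_num [fval]
        rw [e2, Matrix.diagonal_apply_eq, ← Complex.ofReal_mul,
          Real.mul_self_sqrt (fval_nonneg a)]
      · have hne : ¬ ((c : ℕ) + 1 = (b : ℕ)) := by
          intro h
          exact hab (Fin.ext (by omega))
        simp [SpMat, hne, Matrix.diagonal_apply_ne _ hab]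
    · intro d _ hne
      have : ¬ ((a : ℕ) = (d : ℕ) + 1) := by
        intro h; exact hne (Fin.ext (by omega))
      simp [SmMat, this]
    · intro h; exact absurd (Finset.mem_univ _) h
  · have hz : ∀ d : Fin (N twoS), SmMat twoS a d = 0 := by
      intro d
      have : ¬ ((a : ℕ) = (d : ℕ) + 1) := by omega
      simp [SmMat, this]
    simp only [hz, zero_mul, Finset.sum_const_zero]
    by_cases hab : a = b
    · subst hab
      have : fval twoS a = 0 := by
        unfold fval mval spin
        have : ((a:ℕ):ℝ) = 0 := by
          exact_mod_cast (by omega : (a:ℕ) = 0)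
        rw [this]; ring
      simp [this]
    · simp [Matrix.diagonal_apply_ne _ hab]

lemma Sp_comm_Sm : SpMat twoS * SmMat twoS = SmMat twoS * SpMat twoS + (2 : ℂ) • SzMat twoS := by
  rw [Sp_mul_Sm, Sm_mul_Sp]
  ext a b
  by_cases hab : a = b
  · subst hab
    simp only [Matrix.add_apply, Matrix.smul_apply, SzMat, Matrix.diagonal_apply_eq, smul_eq_mul]
    have : gval twoS a = fval twoS a + 2 * mval twoS a := by unfold gval fval; ring
    rw [this]; push_cast; ring
  · simp [Matrix.diagonal_apply_ne _ hab, SzMat]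

end Aux

section Aux2
variable {twoS : ℕ}

lemma twoI_ne : ((2:ℂ) * Complex.I) ≠ 0 := by
  simp [Complex.I_ne_zero]

lemma smul_Sy : ((2:ℂ) * Complex.I) • SyMat twoS = SpMat twoS - SmMat twoS := by
  rw [SyMat, smul_smul, mul_inv_cancel₀ twoI_ne, one_smul]

/-- `B₊ = 2S^z + i(S⁺+S⁻) = 2(S^z + iS^x)`. -/
def BpMat (twoS : ℕ) : Matrix (Fin (N twoS)) (Fin (N twoS)) ℂ :=
  (2 : ℂ) • SzMat twoS + Complex.I • (SpMat twoS + SmMat twoS)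
def BmMat (twoS : ℕ) : Matrix (Fin (N twoS)) (Fin (N twoS)) ℂ :=
  (2 : ℂ) • SzMat twoS - Complex.I • (SpMat twoS + SmMat twoS)

lemma sI2 : (2:ℂ) * Complex.I * Complex.I = -2 := by
  rw [mul_assoc, Complex.I_mul_I]; ring

lemma smul_Bp : ((2:ℂ) * Complex.I) • BpMat twoS
    = ((4:ℂ) * Complex.I) • SzMat twoS - (2:ℂ) • (SpMat twoS + SmMat twoS) := by
  rw [BpMat, smul_add, smul_smul, smul_smul, sI2]
  have s1 : (2:ℂ) * Complex.I * 2 = 4 * Complex.I := by ring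
  rw [s1]; module

lemma smul_Bm : ((2:ℂ) * Complex.I) • BmMat twoS
    = ((4:ℂ) * Complex.I) • SzMat twoS + (2:ℂ) • (SpMat twoS + SmMat twoS) := by
  rw [BmMat, smul_sub, smul_smul, smul_smul, sI2]
  have s1 : (2:ℂ) * Complex.I * 2 = 4 * Complex.I := by ring
  rw [s1]; module

lemma pm_comm_Bp : (SpMat twoS - SmMat twoS) * BpMat twoS
    = BpMat twoS * (SpMat twoS - SmMat twoS)
      + (((4:ℂ) * Complex.I) • SzMat twoS - (2:ℂ) • (SpMat twoS + SmMat twoS)) := by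
  have h1 : SzMat twoS * SpMat twoS = SpMat twoS * SzMat twoS + SpMat twoS := Sz_comm_Sp
  have h2 : SzMat twoS * SmMat twoS = SmMat twoS * SzMat twoS - SmMat twoS := Sz_comm_Sm
  have h3 : SpMat twoS * SmMat twoS = SmMat twoS * SpMat twoS + (2:ℂ) • SzMat twoS := Sp_comm_Sm
  simp only [BpMat, smul_mul_assoc, mul_smul_comm, sub_mul, mul_sub, add_mul, mul_add,
    smul_add, smul_sub, smul_smul]
  simp only [h1, h2, h3]
  module

lemma pm_comm_Bm : (SpMat twoS - SmMat twoS) * BmMat twoS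
    = BmMat twoS * (SpMat twoS - SmMat twoS)
      - (((4:ℂ) * Complex.I) • SzMat twoS + (2:ℂ) • (SpMat twoS + SmMat twoS)) := by
  have h1 : SzMat twoS * SpMat twoS = SpMat twoS * SzMat twoS + SpMat twoS := Sz_comm_Sp
  have h2 : SzMat twoS * SmMat twoS = SmMat twoS * SzMat twoS - SmMat twoS := Sz_comm_Sm
  have h3 : SpMat twoS * SmMat twoS = SmMat twoS * SpMat twoS + (2:ℂ) • SzMat twoS := Sp_comm_Sm
  simp only [BmMat, smul_mul_assoc, mul_smul_comm, sub_mul, mul_sub, add_mul, mul_add,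
    smul_add, smul_sub, smul_smul]
  simp only [h1, h2, h3]
  module

lemma Sy_comm_Bp : SyMat twoS * BpMat twoS = BpMat twoS * SyMat twoS + BpMat twoS := by
  refine smul_right_injective (Matrix (Fin (N twoS)) (Fin (N twoS)) ℂ) twoI_ne ?_
  show ((2:ℂ) * Complex.I) • (SyMat twoS * BpMat twoS)
      = ((2:ℂ) * Complex.I) • (BpMat twoS * SyMat twoS + BpMat twoS)
  rw [smul_add, ← smul_mul_assoc, ← mul_smul_comm, smul_Sy, smul_Bp]
  exact pm_comm_Bp

lemma Sy_comm_Bm : SyMat twoS * BmMat twoS = BmMat twoS * SyMat twoS - BmMat twoS := by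
  refine smul_right_injective (Matrix (Fin (N twoS)) (Fin (N twoS)) ℂ) twoI_ne ?_
  show ((2:ℂ) * Complex.I) • (SyMat twoS * BmMat twoS)
      = ((2:ℂ) * Complex.I) • (BmMat twoS * SyMat twoS - BmMat twoS)
  rw [smul_sub, ← smul_mul_assoc, ← mul_smul_comm, smul_Sy, smul_Bm]
  exact pm_comm_Bm

lemma Bp_add_Bm : BpMat twoS + BmMat twoS = (4 : ℂ) • SzMat twoS := by
  unfold BpMat BmMat; module

end Aux2

section Aux3
variable {twoS L : ℕ}

lemma conf_eq_iff (j : Fin L) (x y : Conf twoS L) :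
    x = y ↔ (∀ i, i ≠ j → x i = y i) ∧ x j = y j := by
  constructor
  · rintro rfl; exact ⟨fun _ _ => rfl, rfl⟩
  · rintro ⟨h1, h2⟩
    funext i
    by_cases hij : i = j
    · rw [hij]; exact h2
    · exact h1 i hij

lemma site_add (j : Fin L) (A B : Matrix (Fin (N twoS)) (Fin (N twoS)) ℂ) :
    site twoS L j (A + B) = site twoS L j A + site twoS L j B := by
  ext x y
  simp only [site, Matrix.of_apply, Matrix.add_apply]
  split_ifs <;> simp

lemma site_sub (j : Fin L) (A B : Matrix (Fin (N twoS)) (Fin (N twoS)) ℂ) :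
    site twoS L j (A - B) = site twoS L j A - site twoS L j B := by
  ext x y
  simp only [site, Matrix.of_apply, Matrix.sub_apply]
  split_ifs <;> simp

lemma site_smul (j : Fin L) (c : ℂ) (A : Matrix (Fin (N twoS)) (Fin (N twoS)) ℂ) :
    site twoS L j (c • A) = c • site twoS L j A := by
  ext x y
  simp only [site, Matrix.of_apply, Matrix.smul_apply, smul_eq_mul]
  split_ifs <;> simp

lemma site_one (j : Fin L) : site twoS L j (1 : Matrix (Fin (N twoS)) (Fin (N twoS)) ℂ) = 1 := by
  ext x y
  simp only [site, Matrix.of_apply]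
  by_cases h : ∀ i, i ≠ j → x i = y i
  · rw [if_pos h]
    by_cases hj : x j = y j
    · have hxy : x = y := (conf_eq_iff j x y).2 ⟨h, hj⟩
      subst hxy
      rw [Matrix.one_apply_eq, Matrix.one_apply_eq]
    · have hxy : x ≠ y := fun he => hj (congrFun he j)
      rw [Matrix.one_apply_ne hj, Matrix.one_apply_ne hxy]
  · rw [if_neg h]
    have hxy : x ≠ y := fun he => h (fun i _ => congrFun he i)
    rw [Matrix.one_apply_ne hxy]

lemma site_diagonal (j : Fin L) (d : Fin (N twoS) → ℂ) :
    site twoS L j (Matrix.diagonal d) = Matrix.diagonal (fun x : Conf twoS L => d (x j)) := by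
  ext x y
  simp only [site, Matrix.of_apply]
  by_cases h : ∀ i, i ≠ j → x i = y i
  · rw [if_pos h]
    by_cases hj : x j = y j
    · have hxy : x = y := (conf_eq_iff j x y).2 ⟨h, hj⟩
      subst hxy
      rw [Matrix.diagonal_apply_eq, Matrix.diagonal_apply_eq]
    · have hxy : x ≠ y := fun he => hj (congrFun he j)
      rw [Matrix.diagonal_apply_ne _ hj, Matrix.diagonal_apply_ne _ hxy]
  · rw [if_neg h]
    have hxy : x ≠ y := fun he => h (fun i _ => congrFun he i)
    rw [Matrix.diagonal_apply_ne _ hxy]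

lemma site_mul_same (j : Fin L) (A B : Matrix (Fin (N twoS)) (Fin (N twoS)) ℂ) :
    site twoS L j A * site twoS L j B = site twoS L j (A * B) := by
  ext x y
  rw [Matrix.mul_apply]
  by_cases hc : ∀ i, i ≠ j → x i = y i
  · have hRHS : site twoS L j (A * B) x y = ∑ c : Fin (N twoS), A (x j) c * B c (y j) := by
      simp only [site, Matrix.of_apply]
      rw [if_pos hc, Matrix.mul_apply]
    rw [hRHS]
    have hz : ∀ z ∈ (Finset.univ : Finset (Conf twoS L)),
        z ∉ Finset.univ.image (fun c : Fin (N twoS) => Function.update x j c) →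
        site twoS L j A x z * site twoS L j B z y = 0 := by
      intro z _ hz
      have h1 : ¬ ∀ i, i ≠ j → x i = z i := by
        intro h1
        apply hz
        rw [Finset.mem_image]
        refine ⟨z j, Finset.mem_univ _, ?_⟩
        funext i
        by_cases hij : i = j
        · rw [hij, Function.update_self]
        · rw [Function.update_of_ne hij, h1 i hij]
      simp only [site, Matrix.of_apply]
      rw [if_neg h1, zero_mul]
    rw [← Finset.sum_subset (Finset.subset_univ _) hz]
    rw [Finset.sum_image (fun c _ d _ h => by
      have := congrFun h j
      rwa [Function.update_self, Function.update_self] at this)]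
    apply Finset.sum_congr rfl
    intro c _
    have h1 : ∀ i, i ≠ j → x i = Function.update x j c i := by
      intro i hij; rw [Function.update_of_ne hij]
    have h2 : ∀ i, i ≠ j → Function.update x j c i = y i := by
      intro i hij; rw [Function.update_of_ne hij]; exact hc i hij
    have e1 : site twoS L j A x (Function.update x j c) = A (x j) c := by
      simp only [site, Matrix.of_apply]
      rw [if_pos h1, Function.update_self]
    have e2 : site twoS L j B (Function.update x j c) y = B c (y j) := by
      simp only [site, Matrix.of_apply]
      rw [if_pos h2, Function.update_self]
    rw [e1, e2]
  · have hRHS : site twoS L j (A * B) x y = 0 := by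
      simp only [site, Matrix.of_apply]; rw [if_neg hc]
    rw [hRHS]
    apply Finset.sum_eq_zero
    intro z _
    by_cases h1 : ∀ i, i ≠ j → x i = z i
    · by_cases h2 : ∀ i, i ≠ j → z i = y i
      · exact absurd (fun i hij => (h1 i hij).trans (h2 i hij)) hc
      · simp only [site, Matrix.of_apply]; rw [if_neg h2, mul_zero]
    · simp only [site, Matrix.of_apply]; rw [if_neg h1, zero_mul]

lemma site_mul_ne {j' j : Fin L} (h : j' ≠ j) (A B : Matrix (Fin (N twoS)) (Fin (N twoS)) ℂ) :
    site twoS L j' A * site twoS L j B =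
      Matrix.of (fun x y => if ∀ i, i ≠ j → i ≠ j' → x i = y i
        then A (x j') (y j') * B (x j) (y j) else 0) := by
  ext x y
  rw [Matrix.mul_apply, Matrix.of_apply]
  rw [Finset.sum_eq_single (Function.update x j' (y j'))]
  · have h1 : ∀ i, i ≠ j' → x i = Function.update x j' (y j') i := by
      intro i hij; rw [Function.update_of_ne hij]
    have hA : site twoS L j' A x (Function.update x j' (y j')) = A (x j') (y j') := by
      simp only [site, Matrix.of_apply]
      rw [if_pos h1, Function.update_self]
    rw [hA]
    by_cases h2 : ∀ i, i ≠ j → i ≠ j' → x i = y i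
    · have h3 : ∀ i, i ≠ j → Function.update x j' (y j') i = y i := by
        intro i hij
        by_cases hij' : i = j'
        · rw [hij', Function.update_self]
        · rw [Function.update_of_ne hij']; exact h2 i hij hij'
      have hB : site twoS L j B (Function.update x j' (y j')) y = B (x j) (y j) := by
        simp only [site, Matrix.of_apply]
        rw [if_pos h3, Function.update_of_ne h.symm]
      rw [hB, if_pos h2]
    · have h3 : ¬ ∀ i, i ≠ j → Function.update x j' (y j') i = y i := by
        intro h3
        apply h2
        intro i hij hij'
        have := h3 i hij
        rwa [Function.update_of_ne hij'] at this
      have hB : site twoS L j B (Function.update x j' (y j')) y = 0 := by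
        simp only [site, Matrix.of_apply]
        rw [if_neg h3]
      rw [hB, if_neg h2, mul_zero]
  · intro z _ hz
    by_cases h1 : ∀ i, i ≠ j' → x i = z i
    · by_cases h2 : ∀ i, i ≠ j → z i = y i
      · exfalso
        apply hz
        funext i
        by_cases hij' : i = j'
        · rw [hij', Function.update_self]
          exact h2 j' h
        · rw [Function.update_of_ne hij']
          exact (h1 i hij').symm
      · simp only [site, Matrix.of_apply]; rw [if_neg h2, mul_zero]
    · simp only [site, Matrix.of_apply]; rw [if_neg h1, zero_mul]
  · intro hmem; exact absurd (Finset.mem_univ _) hmem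

lemma site_comm {j' j : Fin L} (h : j' ≠ j) (A B : Matrix (Fin (N twoS)) (Fin (N twoS)) ℂ) :
    site twoS L j' A * site twoS L j B = site twoS L j B * site twoS L j' A := by
  rw [site_mul_ne h, site_mul_ne h.symm]
  ext x y
  simp only [Matrix.of_apply]
  have hiff : (∀ i, i ≠ j → i ≠ j' → x i = y i) ↔ (∀ i, i ≠ j' → i ≠ j → x i = y i) :=
    ⟨fun hh i h1 h2 => hh i h2 h1, fun hh i h1 h2 => hh i h2 h1⟩
  by_cases hc : ∀ i, i ≠ j → i ≠ j' → x i = y i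
  · rw [if_pos hc, if_pos (hiff.1 hc)]; ring
  · rw [if_neg hc, if_neg (fun hh => hc (hiff.2 hh))]

end Aux3

section Aux4
open NormedSpace
variable {twoS L : ℕ}

lemma smul_one_eq_diagonal {n : Type*} [Fintype n] [DecidableEq n] (lam : ℂ) :
    lam • (1 : Matrix n n ℂ) = Matrix.diagonal (fun _ => lam) := by
  ext i j
  by_cases h : i = j
  · subst h; simp [Matrix.one_apply]
  · simp [Matrix.one_apply_ne h, Matrix.diagonal_apply_ne _ h]

lemma exp_intertwine {n : Type*} [Fintype n] [DecidableEq n] {A B C : Matrix n n ℂ}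
    (h : A * B = B * C) : exp A * B = B * exp C := by
  letI : SeminormedRing (Matrix n n ℂ) := Matrix.linftyOpSemiNormedRing
  letI : NormedRing (Matrix n n ℂ) := Matrix.linftyOpNormedRing
  letI : NormedAlgebra ℂ (Matrix n n ℂ) := Matrix.linftyOpNormedAlgebra
  have hpow : ∀ k : ℕ, A ^ k * B = B * C ^ k := by
    intro k
    induction k with
    | zero => simp
    | succ k ih => rw [pow_succ, pow_succ, mul_assoc, h, ← mul_assoc, ih, mul_assoc]
  simp only [exp_eq_tsum ℂ]
  calc _ = ∑' k : ℕ, ((k.factorial : ℂ)⁻¹ • A ^ k) * B :=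
        ((expSeries_summable' (𝕂 := ℂ) A).tsum_mul_right B).symm
    _ = ∑' k : ℕ, B * ((k.factorial : ℂ)⁻¹ • C ^ k) :=
        tsum_congr fun k => by rw [smul_mul_assoc, hpow k, mul_smul_comm]
    _ = _ := (expSeries_summable' (𝕂 := ℂ) C).tsum_mul_left B

lemma exp_add_smul_one {n : Type*} [Fintype n] [DecidableEq n] (A : Matrix n n ℂ) (lam : ℂ) :
    exp (A + lam • (1 : Matrix n n ℂ)) = Complex.exp lam • exp A := by
  have hco : Commute A (lam • (1 : Matrix n n ℂ)) := (Commute.one_right A).smul_right lam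
  rw [Matrix.exp_add_of_commute A _ hco, smul_one_eq_diagonal, Matrix.exp_diagonal]
  have h2 : (exp (fun _ : n => lam)) = fun _ : n => Complex.exp lam := by
    rw [Pi.exp_def, Complex.exp_eq_exp_ℂ]
  rw [h2, ← smul_one_eq_diagonal, mul_smul_comm, mul_one]

end Aux4

section Aux5
open NormedSpace
variable {twoS L : ℕ}

lemma SyT_comm_site (jf : Fin L) {Bs : Matrix (Fin (N twoS)) (Fin (N twoS)) ℂ} {s : ℂ}
    (hB : SyMat twoS * Bs = Bs * SyMat twoS + s • Bs) :
    SyT twoS L * site twoS L jf Bs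
      = site twoS L jf Bs * SyT twoS L + s • site twoS L jf Bs := by
  unfold SyT
  rw [Finset.sum_mul, Finset.mul_sum]
  rw [← Finset.sum_erase_add _ _ (Finset.mem_univ jf),
      ← Finset.sum_erase_add _ _ (Finset.mem_univ jf)]
  have h1 : ∀ j' ∈ Finset.univ.erase jf,
      site twoS L j' (SyMat twoS) * site twoS L jf Bs
        = site twoS L jf Bs * site twoS L j' (SyMat twoS) :=
    fun j' hj' => site_comm (Finset.ne_of_mem_erase hj') _ _
  rw [Finset.sum_congr rfl h1, site_mul_same, hB, site_add, site_smul, ← site_mul_same]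
  abel

lemma cexp_neg_pi_I : Complex.exp (-Complex.I * (Real.pi : ℂ)) = -1 := by
  rw [show -Complex.I * (Real.pi:ℂ) = -((Real.pi:ℂ) * Complex.I) by ring, Complex.exp_neg,
    Complex.exp_pi_mul_I]
  norm_num

lemma key_conj (jf : Fin L) (Bs : Matrix (Fin (N twoS)) (Fin (N twoS)) ℂ) (s : ℂ)
    (hB : SyMat twoS * Bs = Bs * SyMat twoS + s • Bs) :
    exp ((-Complex.I * (Real.pi : ℂ)) • SyT twoS L) * site twoS L jf Bs
      = Complex.exp ((-Complex.I * (Real.pi : ℂ)) * s) •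
          (site twoS L jf Bs * exp ((-Complex.I * (Real.pi : ℂ)) • SyT twoS L)) := by
  have h1 : ((-Complex.I * (Real.pi : ℂ)) • SyT twoS L) * site twoS L jf Bs
      = site twoS L jf Bs *
        (((-Complex.I * (Real.pi : ℂ)) • SyT twoS L) + ((-Complex.I * (Real.pi : ℂ)) * s) • 1) := by
    rw [smul_mul_assoc, SyT_comm_site jf hB, smul_add, mul_add, mul_smul_comm, mul_smul_comm,
      mul_one, smul_smul]
  have h2 := exp_intertwine h1
  rw [exp_add_smul_one, mul_smul_comm] at h2
  exact h2

lemma Uy_comm_site_Sz (jf : Fin L) :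
    Uy twoS L * site twoS L jf (SzMat twoS) = -(site twoS L jf (SzMat twoS) * Uy twoS L) := by
  have hp := key_conj (twoS := twoS) (L := L) jf (BpMat twoS) 1
    (by rw [one_smul]; exact Sy_comm_Bp)
  have hm := key_conj (twoS := twoS) (L := L) jf (BmMat twoS) (-1)
    (by rw [neg_one_smul, ← sub_eq_add_neg]; exact Sy_comm_Bm)
  rw [mul_one, cexp_neg_pi_I, neg_one_smul] at hp
  rw [show (-Complex.I * (Real.pi:ℂ)) * (-1) = (Real.pi:ℂ) * Complex.I from by ring,
    Complex.exp_pi_mul_I, neg_one_smul] at hm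
  have hsum : exp ((-Complex.I * (Real.pi : ℂ)) • SyT twoS L) *
      (site twoS L jf (BpMat twoS) + site twoS L jf (BmMat twoS))
      = -((site twoS L jf (BpMat twoS) + site twoS L jf (BmMat twoS)) *
          exp ((-Complex.I * (Real.pi : ℂ)) • SyT twoS L)) := by
    rw [mul_add, hp, hm, add_mul, neg_add]
  rw [← site_add, Bp_add_Bm, site_smul, mul_smul_comm, smul_mul_assoc, ← smul_neg] at hsum
  have h4 : (4 : ℂ) ≠ 0 := by norm_num
  have := smul_right_injective (Op twoS L) h4 hsum
  exact this

end Aux5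

section Aux6
open NormedSpace
variable {twoS L : ℕ}

/-- Gauss sum: `∑_{j=1}^L (j - 1/2) = L²/2`. -/
lemma coeff_sum : ∑ j ∈ Finset.Icc 1 L, ((j:ℂ) - 1/2) = (L:ℂ)^2 / 2 := by
  have hIccRange : Finset.Icc 1 L = (Finset.range (L+1)).erase 0 := by
    ext a; simp [Finset.mem_Icc, Finset.mem_range, Finset.mem_erase]; omega
  have h0 : ∑ j ∈ Finset.Icc 1 L, (j:ℂ) = ∑ j ∈ Finset.range (L+1), (j:ℂ) := by
    rw [hIccRange]
    exact Finset.sum_erase _ (by norm_num)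
  have hnat : (∑ i ∈ Finset.range (L+1), i) * 2 = (L+1) * L := by
    have := Finset.sum_range_id_mul_two (L+1)
    simpa using this
  have h1 : (∑ j ∈ Finset.range (L+1), (j:ℂ)) * 2 = ((L:ℂ)+1) * L := by
    calc (∑ j ∈ Finset.range (L+1), (j:ℂ)) * 2
        = (((∑ i ∈ Finset.range (L+1), i) * 2 : ℕ) : ℂ) := by push_cast; ring
      _ = (((L+1) * L : ℕ) : ℂ) := by rw [hnat]
      _ = ((L:ℂ)+1) * L := by push_cast; ring
  rw [Finset.sum_sub_distrib, h0, Finset.sum_const, Nat.card_Icc]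
  simp only [Nat.add_sub_cancel, nsmul_eq_mul]
  linear_combination h1 / 2

/-- The diagonal function of the link-twist generator. -/
def gdFun (twoS L : ℕ) [NeZero L] : Conf twoS L → ℂ := fun x =>
  ∑ j ∈ Finset.Icc 1 L,
    ((j:ℂ) - 1/2) * (((mval twoS (x ((j:ℕ):Fin L)) : ℝ) : ℂ) - ((spin twoS : ℝ) : ℂ))

lemma twistGenL_eq_diagonal [NeZero L] :
    twistGenL twoS L = Matrix.diagonal (gdFun twoS L) := by
  unfold twistGenL gdFun
  have hterm : ∀ j ∈ Finset.Icc 1 L,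
      ((j:ℂ) - 1/2) • site twoS L ((j:ℕ):Fin L) (SzMat twoS - ((spin twoS : ℝ) : ℂ) • 1)
        = Matrix.diagonal (fun x : Conf twoS L =>
            ((j:ℂ) - 1/2) * (((mval twoS (x ((j:ℕ):Fin L)) : ℝ) : ℂ) - ((spin twoS : ℝ) : ℂ))) := by
    intro j _
    have hd : SzMat twoS - ((spin twoS : ℝ) : ℂ) • 1
        = Matrix.diagonal (fun k => ((mval twoS k : ℝ):ℂ) - ((spin twoS : ℝ) : ℂ)) := by
      rw [SzMat, smul_one_eq_diagonal]
      ext a b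
      by_cases hab : a = b
      · subst hab; simp
      · simp [Matrix.diagonal_apply_ne _ hab]
    rw [hd, site_diagonal, ← Matrix.diagonal_smul]
    congr 1
  rw [Finset.sum_congr rfl hterm]
  ext x y
  rw [Matrix.sum_apply]
  by_cases hxy : x = y
  · subst hxy
    simp [Matrix.diagonal_apply_eq]
  · simp [Matrix.diagonal_apply_ne _ hxy]

lemma UtwL_eq_diagonal [NeZero L] (ε : ℝ) :
    UtwL twoS L ε = Matrix.diagonal (fun x =>
      Complex.exp ((-(ε:ℂ) * ((2 * Real.pi / L : ℝ):ℂ) * Complex.I) * gdFun twoS L x)) := by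
  unfold UtwL
  rw [twistGenL_eq_diagonal, ← Matrix.diagonal_smul, Matrix.exp_diagonal]
  congr 1
  funext x
  rw [Pi.exp_def, Complex.exp_eq_exp_ℂ]
  rfl

lemma mval_sub_spin (k : Fin (N twoS)) :
    ((mval twoS k : ℝ):ℂ) - ((spin twoS : ℝ) : ℂ) = -((k:ℕ):ℂ) := by
  unfold mval; push_cast; ring

lemma phase_nat {ε : ℝ} (hε : ε = 1 ∨ ε = -1) (n : ℕ) :
    Complex.exp ((ε:ℂ) * (2 * (Real.pi:ℂ) * Complex.I) * (n:ℂ)) = 1 := by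
  obtain ⟨k, hk⟩ : ∃ k : ℤ, (ε:ℂ) * (n:ℂ) = (k:ℂ) := by
    rcases hε with h | h <;> subst h
    · exact ⟨(n:ℤ), by push_cast; ring⟩
    · exact ⟨-(n:ℤ), by push_cast; ring⟩
  rw [show (ε:ℂ) * (2 * (Real.pi:ℂ) * Complex.I) * (n:ℂ)
      = ((ε:ℂ) * (n:ℂ)) * (2 * (Real.pi:ℂ) * Complex.I) from by ring, hk]
  exact Complex.exp_int_mul_two_pi_mul_I k

/-- Generator-level spin-reversal relation. -/
lemma Uy_comm_twistGenL [NeZero L] :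
    Uy twoS L * twistGenL twoS L
      = (-(twistGenL twoS L) - (((spin twoS : ℝ) : ℂ) * (L:ℂ)^2) • 1) * Uy twoS L := by
  have hsite : ∀ jf : Fin L,
      Uy twoS L * site twoS L jf (SzMat twoS - ((spin twoS : ℝ) : ℂ) • 1)
        = (-(site twoS L jf (SzMat twoS - ((spin twoS : ℝ) : ℂ) • 1))
            - (2 * ((spin twoS : ℝ) : ℂ)) • 1) * Uy twoS L := by
    intro jf
    rw [site_sub, site_smul, site_one, mul_sub, Uy_comm_site_Sz jf, mul_smul_comm, mul_one]
    simp only [sub_mul, neg_mul, smul_mul_assoc, one_mul, neg_sub]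
    module
  unfold twistGenL
  rw [Finset.mul_sum]
  have hterm : ∀ j ∈ Finset.Icc 1 L,
      Uy twoS L * (((j:ℂ) - 1/2) • site twoS L ((j:ℕ):Fin L)
          (SzMat twoS - ((spin twoS : ℝ) : ℂ) • 1))
        = (((j:ℂ) - 1/2) • (-(site twoS L ((j:ℕ):Fin L) (SzMat twoS - ((spin twoS : ℝ) : ℂ) • 1))
            - (2 * ((spin twoS : ℝ) : ℂ)) • 1)) * Uy twoS L := by
    intro j _
    rw [mul_smul_comm, hsite, smul_mul_assoc]
  rw [Finset.sum_congr rfl hterm, ← Finset.sum_mul]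
  congr 1
  have hexp : ∀ j ∈ Finset.Icc 1 L,
      ((j:ℂ) - 1/2) • (-(site twoS L ((j:ℕ):Fin L) (SzMat twoS - ((spin twoS : ℝ) : ℂ) • 1))
          - (2 * ((spin twoS : ℝ) : ℂ)) • 1)
        = -(((j:ℂ) - 1/2) • site twoS L ((j:ℕ):Fin L) (SzMat twoS - ((spin twoS : ℝ) : ℂ) • 1))
          - (((j:ℂ) - 1/2) * (2 * ((spin twoS : ℝ) : ℂ))) • 1 := by
    intro j _
    rw [smul_sub, smul_neg, smul_smul]
  rw [Finset.sum_congr rfl hexp, Finset.sum_sub_distrib]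
  congr 1
  · rw [Finset.sum_neg_distrib]
  · rw [← Finset.sum_smul, ← Finset.sum_mul, coeff_sum]
    congr 1
    ring

/-- Commutation of `U_y` with the link twist. -/
lemma Uy_mul_UtwL [NeZero L] (hLeven : Even L) (ε : ℝ) (hε : ε = 1 ∨ ε = -1) :
    Uy twoS L * UtwL twoS L ε = UtwL twoS L (-ε) * Uy twoS L := by
  set cc : ℂ := -(ε:ℂ) * ((2 * Real.pi / L : ℝ):ℂ) * Complex.I with hcc
  have hgen : (cc • (-(twistGenL twoS L) - (((spin twoS : ℝ) : ℂ) * (L:ℂ)^2) • 1)) * Uy twoS L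
      = Uy twoS L * (cc • twistGenL twoS L) := by
    rw [mul_smul_comm, Uy_comm_twistGenL, smul_mul_assoc]
  have h2 := exp_intertwine hgen
  have hUtw : UtwL twoS L ε = exp (cc • twistGenL twoS L) := rfl
  rw [hUtw, ← h2]
  suffices hEq : exp (cc • (-(twistGenL twoS L) - (((spin twoS : ℝ) : ℂ) * (L:ℂ)^2) • 1))
      = UtwL twoS L (-ε) by rw [hEq]
  have hdiag : cc • (-(twistGenL twoS L) - (((spin twoS : ℝ) : ℂ) * (L:ℂ)^2) • 1)
      = Matrix.diagonal (fun x => -cc * gdFun twoS L x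
          + -(cc * (((spin twoS : ℝ) : ℂ) * (L:ℂ)^2))) := by
    rw [twistGenL_eq_diagonal]
    ext x y
    by_cases hxy : x = y
    · subst hxy
      simp only [Matrix.smul_apply, Matrix.sub_apply, Matrix.neg_apply,
        Matrix.one_apply_eq, Matrix.diagonal_apply_eq, smul_eq_mul]
      ring
    · simp [Matrix.diagonal_apply_ne _ hxy, Matrix.one_apply_ne hxy]
  obtain ⟨K, hK⟩ := hLeven
  have hK0 : (K:ℂ) ≠ 0 := by
    have : L ≠ 0 := NeZero.ne L
    have : K ≠ 0 := by omega
    exact_mod_cast Nat.cast_ne_zero.mpr this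
  have hKC : (L:ℂ) = 2 * (K:ℂ) := by rw [hK]; push_cast; ring
  have hphase : Complex.exp (-(cc * (((spin twoS : ℝ) : ℂ) * (L:ℂ)^2))) = 1 := by
    have harg : -(cc * (((spin twoS : ℝ) : ℂ) * (L:ℂ)^2))
        = (ε:ℂ) * (2 * (Real.pi:ℂ) * Complex.I) * ((twoS * K : ℕ):ℂ) := by
      rw [hcc]
      unfold spin
      push_cast
      rw [hKC]
      field_simp
    rw [harg]
    exact phase_nat hε _
  rw [hdiag, Matrix.exp_diagonal, UtwL_eq_diagonal (-ε)]
  apply congrArg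
  funext x
  rw [Pi.exp_def]
  show exp (-cc * gdFun twoS L x + -(cc * (((spin twoS : ℝ) : ℂ) * (L:ℂ)^2))) = _
  rw [← Complex.exp_eq_exp_ℂ, Complex.exp_add, hphase, mul_one]
  congr 1
  rw [hcc]
  push_cast
  ring

end Aux6

section Aux7
open NormedSpace
variable {twoS L : ℕ}

lemma Plink_apply [NeZero L] (x y : Conf twoS L) :
    Plink twoS L x y = if x = (fun i => y (1 - i)) then 1 else 0 := by
  unfold Plink Pop Utrl
  rw [Matrix.mul_apply]
  rw [Finset.sum_eq_single (fun i => y (i + 1))]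
  · have hfun : (fun i : Fin L => y (-i + 1)) = (fun i => y (1 - i)) := by
      funext i; congr 1; rw [neg_add_eq_sub]
    simp only [Matrix.of_apply, if_true, mul_one]
    rw [hfun]
  · intro z _ hz
    simp only [Matrix.of_apply]
    rw [if_neg hz, mul_zero]
  · intro h; exact absurd (Finset.mem_univ _) h

open Fin.CommRing in
lemma gd_flip [NeZero L] (y : Conf twoS L) :
    gdFun twoS L (fun i => y (1 - i)) + gdFun twoS L y
      = -(L:ℂ) * ((∑ j ∈ Finset.Icc 1 L, (y ((j:ℕ):Fin L) : ℕ) : ℕ) : ℂ) := by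
  unfold gdFun
  have h1 : ∑ j ∈ Finset.Icc 1 L,
        ((j:ℂ) - 1/2) * (((mval twoS ((fun i => y (1 - i)) ((j:ℕ):Fin L)) : ℝ) : ℂ)
          - ((spin twoS : ℝ) : ℂ))
      = ∑ j ∈ Finset.Icc 1 L,
        ((L:ℂ) - ((j:ℂ) - 1/2)) * (((mval twoS (y ((j:ℕ):Fin L)) : ℝ) : ℂ)
          - ((spin twoS : ℝ) : ℂ)) := by
    refine Finset.sum_nbij' (fun j => L + 1 - j) (fun j => L + 1 - j) ?_ ?_ ?_ ?_ ?_
    · intro a ha; simp only [Finset.mem_Icc] at *; omega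
    · intro a ha; simp only [Finset.mem_Icc] at *; omega
    · intro a ha; simp only [Finset.mem_Icc] at ha; omega
    · intro a ha; simp only [Finset.mem_Icc] at ha; omega
    · intro a ha
      simp only [Finset.mem_Icc] at ha
      have hcast : ((L + 1 - a : ℕ) : ℂ) = (L:ℂ) + 1 - (a:ℂ) := by
        push_cast [Nat.cast_sub (by omega : a ≤ L + 1)]
        ring
      have hFin : ((L + 1 - a : ℕ) : Fin L) = 1 - ((a:ℕ) : Fin L) := by
        rw [Nat.cast_sub (by omega : a ≤ L + 1)]
        congr 1
        push_cast
        rw [Fin.natCast_self]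
        ring
      have hsite : (fun i : Fin L => y (1 - i)) ((a : ℕ) : Fin L)
          = y ((L + 1 - a : ℕ) : Fin L) := by
        rw [hFin]
      have hcoef : (L:ℂ) - (((L + 1 - a : ℕ) : ℂ) - 1/2) = (a:ℂ) - 1/2 := by
        rw [hcast]; ring
      rw [hcoef, hsite]
  rw [h1, ← Finset.sum_add_distrib]
  have h2 : ∀ j ∈ Finset.Icc 1 L,
      ((L:ℂ) - ((j:ℂ) - 1/2)) * (((mval twoS (y ((j:ℕ):Fin L)) : ℝ) : ℂ)
          - ((spin twoS : ℝ) : ℂ))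
        + ((j:ℂ) - 1/2) * (((mval twoS (y ((j:ℕ):Fin L)) : ℝ) : ℂ)
          - ((spin twoS : ℝ) : ℂ))
      = -(L:ℂ) * ((y ((j:ℕ):Fin L) : ℕ) : ℂ) := by
    intro j _
    rw [show ((L:ℂ) - ((j:ℂ) - 1/2)) * (((mval twoS (y ((j:ℕ):Fin L)) : ℝ) : ℂ)
          - ((spin twoS : ℝ) : ℂ))
        + ((j:ℂ) - 1/2) * (((mval twoS (y ((j:ℕ):Fin L)) : ℝ) : ℂ)
          - ((spin twoS : ℝ) : ℂ))
      = (L:ℂ) * (((mval twoS (y ((j:ℕ):Fin L)) : ℝ) : ℂ) - ((spin twoS : ℝ) : ℂ)) from by ring]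
    rw [mval_sub_spin]
    ring
  rw [Finset.sum_congr rfl h2]
  push_cast
  rw [Finset.mul_sum]

lemma Plink_mul_UtwL [NeZero L] (ε : ℝ) (hε : ε = 1 ∨ ε = -1) :
    Plink twoS L * UtwL twoS L ε = UtwL twoS L (-ε) * Plink twoS L := by
  rw [UtwL_eq_diagonal ε, UtwL_eq_diagonal (-ε)]
  ext x y
  rw [Matrix.mul_diagonal, Matrix.diagonal_mul, Plink_apply]
  by_cases hxy : x = (fun i => y (1 - i))
  · rw [if_pos hxy, one_mul, mul_one]
    subst hxy
    have hsum := gd_flip (twoS := twoS) y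
    set g1 := gdFun twoS L (fun i => y (1 - i)) with hg1
    set g2 := gdFun twoS L y with hg2
    set n : ℕ := ∑ j ∈ Finset.Icc 1 L, (y ((j:ℕ):Fin L) : ℕ) with hn
    have hL0 : (L:ℂ) ≠ 0 := Nat.cast_ne_zero.mpr (NeZero.ne L)
    have hg2' : g2 = -g1 - (L:ℂ) * (n:ℂ) := by linear_combination hsum
    have hkey : -(ε:ℂ) * ((2 * Real.pi / L : ℝ):ℂ) * Complex.I * g2
        = -((-ε:ℝ):ℂ) * ((2 * Real.pi / L : ℝ):ℂ) * Complex.I * g1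
          + (ε:ℂ) * (2 * (Real.pi:ℂ) * Complex.I) * (n:ℂ) := by
      rw [hg2']
      push_cast
      field_simp
      ring
    rw [hkey, Complex.exp_add, phase_nat hε n, mul_one]
  · rw [if_neg hxy, zero_mul, mul_zero]

end Aux7

/-- Theorem 9: `P_link U^y_π` commutes with the link-centered twist
operators. -/
theorem combined_link_parity_spin_reversal_twist (twoS L : ℕ) [NeZero L]
    (hS : 0 < twoS) (hL4 : 4 ≤ L) (hLeven : Even L) :
    (Plink twoS L * Uy twoS L) * UtwL twoS L 1 =
        UtwL twoS L 1 * (Plink twoS L * Uy twoS L) ∧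
    (Plink twoS L * Uy twoS L) * UtwL twoS L (-1) =
        UtwL twoS L (-1) * (Plink twoS L * Uy twoS L) := by
  have main : ∀ ε : ℝ, (ε = 1 ∨ ε = -1) →
      (Plink twoS L * Uy twoS L) * UtwL twoS L ε
        = UtwL twoS L ε * (Plink twoS L * Uy twoS L) := by
    intro ε hε
    have hε' : -ε = 1 ∨ -ε = -1 := by
      rcases hε with h | h <;> rw [h] <;> norm_num
    have hU := Uy_mul_UtwL (twoS := twoS) (L := L) hLeven ε hε
    have hP := Plink_mul_UtwL (twoS := twoS) (L := L) (-ε) hε'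
    rw [neg_neg] at hP
    calc (Plink twoS L * Uy twoS L) * UtwL twoS L ε
        = Plink twoS L * (Uy twoS L * UtwL twoS L ε) := by rw [mul_assoc]
      _ = Plink twoS L * (UtwL twoS L (-ε) * Uy twoS L) := by rw [hU]
      _ = (Plink twoS L * UtwL twoS L (-ε)) * Uy twoS L := by rw [mul_assoc]
      _ = (UtwL twoS L ε * Plink twoS L) * Uy twoS L := by rw [hP]
      _ = UtwL twoS L ε * (Plink twoS L * Uy twoS L) := by rw [mul_assoc]
  exact ⟨main 1 (Or.inl rfl), main (-1) (Or.inr rfl)⟩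


end LSM
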